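/- Let Γ be a countable discrete group and f ∈ ℤΓ invertible in ℓ¹(Γ) with inverse w_f^Δ = f⁻¹. Then ξ = η ∘ ρ_{w_f^Δ} : ℓ∞(Γ,ℤ) → X_f is a well-defined surjective group homomorphism whose kernel is ρ_f(ℓ∞(Γ,ℤ)), and ξ(λ^γ v) = α_f^γ(ξ(v)) for every γ ∈ Γ and v ∈ ℓ∞(Γ,ℤ). -/

import Mathlib

open scoped BigOperators symmDiff Pointwise

noncomputable section

/-- The additive circle `𝕋 = ℝ/ℤ`. -/
abbrev Torus : Type := AddCircle (1 : ℝ)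

section GroupDefs

variable {Γ : Type*} [Group Γ]

/-- For `f ∈ ℤΓ`, the map `ρ_f : 𝕋^Γ → 𝕋^Γ`, `(ρ_f x)_{γ'} = Σ_γ f_γ • x_{γ'γ}`. -/
def rhoT (f : Γ →₀ ℤ) (x : Γ → Torus) : Γ → Torus :=
  fun γ' => f.sum fun γ c => c • x (γ' * γ)

/-- The compact abelian group `X_f = ker ρ_f ⊆ 𝕋^Γ` (as a subset). -/
def XSet (f : Γ →₀ ℤ) : Set (Γ → Torus) := {x | rhoT f x = 0}

/-- The left shift `(λ^γ x)_{γ'} = x_{γ⁻¹ γ'}` on `𝕋^Γ`; restricted to `X_f` this is `α_f^γ`. -/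
def lsh (γ : Γ) (x : Γ → Torus) : Γ → Torus := fun γ' => x (γ⁻¹ * γ')

/-- The left shift `(λ^γ w)_{γ'} = w_{γ⁻¹ γ'}` on real-valued functions. -/
def lshR (γ : Γ) (w : Γ → ℝ) : Γ → ℝ := fun γ' => w (γ⁻¹ * γ')

/-- Expansiveness of the `Γ`-action `α_f` on `X_f`: there is an open neighbourhood `U`
of `0` such that the only point of `X_f` all of whose translates stay in `U` is `0`
(equivalently, `⋂_γ α_f^γ (U ∩ X_f) = {0}`). -/
def ExpansiveAction (f : Γ →₀ ℤ) : Prop :=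
  ∃ U : Set (Γ → Torus), IsOpen U ∧ {x | x ∈ XSet f ∧ ∀ γ : Γ, lsh γ x ∈ U} = {0}

/-- `w ∈ ℓ∞(Γ)`: boundedness of a real-valued function. -/
def Bdd (w : Γ → ℝ) : Prop := ∃ C : ℝ, ∀ γ : Γ, |w γ| ≤ C

/-- `w ∈ ℓ∞(Γ,ℤ)`: all values are integers. -/
def IntValued (w : Γ → ℝ) : Prop := ∀ γ : Γ, ∃ k : ℤ, w γ = (k : ℝ)

/-- For `f ∈ ℤΓ`, the operator `ρ_f` on `ℓ∞(Γ)`: `(ρ_f w)_γ = Σ_{γ'} w_{γγ'} f_{γ'}`. -/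
def rhoInf (f : Γ →₀ ℤ) (w : Γ → ℝ) : Γ → ℝ :=
  fun γ => f.sum fun γ' c => (c : ℝ) * w (γ * γ')

/-- For `h ∈ ℓ¹(Γ)`, the operator `ρ_h` on `ℓ∞(Γ)`: `(ρ_h w)_γ = Σ_{γ'} w_{γγ'} h_{γ'}`. -/
def rhoL1 (h : Γ → ℝ) (w : Γ → ℝ) : Γ → ℝ :=
  fun γ => ∑' γ' : Γ, w (γ * γ') * h γ'

/-- Convolution on `ℓ¹(Γ)`: `(g·h)_γ = Σ_{γ'} g_{γ'} h_{γ'⁻¹γ}`. -/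
def conv (g h : Γ → ℝ) : Γ → ℝ := fun γ => ∑' γ' : Γ, g γ' * h (γ'⁻¹ * γ)

/-- Convolution on `ℓ¹(Γ,ℂ)`. -/
def convC (g h : Γ → ℂ) : Γ → ℂ := fun γ => ∑' γ' : Γ, g γ' * h (γ'⁻¹ * γ)

open Classical in
/-- The unit `δ₁` of the convolution algebra `ℓ¹(Γ)`. -/
def deltaOne : Γ → ℝ := fun γ => if γ = 1 then 1 else 0

open Classical in
/-- The unit `δ₁` of `ℓ¹(Γ,ℂ)`. -/
def deltaOneC : Γ → ℂ := fun γ => if γ = 1 then 1 else 0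

/-- `g` is a two-sided convolution inverse of `f` in `ℓ¹(Γ)`. -/
def IsL1Inverse (f g : Γ → ℝ) : Prop :=
  Summable g ∧ conv f g = deltaOne ∧ conv g f = deltaOne

/-- View `f ∈ ℤΓ` as an element of `ℓ¹(Γ)`. -/
def fR (f : Γ →₀ ℤ) : Γ → ℝ := fun γ => (f γ : ℝ)

/-- View `f ∈ ℤΓ` as an element of `ℓ¹(Γ,ℂ)`. -/
def fCC (f : Γ →₀ ℤ) : Γ → ℂ := fun γ => (f γ : ℂ)

/-- The `ℓ¹`-norm `‖f‖₁` of `f ∈ ℤΓ`. -/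
def finsuppL1 (f : Γ →₀ ℤ) : ℝ := f.sum fun _ c => |(c : ℝ)|

/-- The `ℓ¹`-norm of `h ∈ ℓ¹(Γ,ℂ)`. -/
def l1normC (h : Γ → ℂ) : ℝ := ∑' γ : Γ, ‖h γ‖

/-- Coordinatewise reduction mod 1, `η : ℓ∞(Γ) → 𝕋^Γ`. -/
def etaT (w : Γ → ℝ) : Γ → Torus := fun γ => ((w γ : ℝ) : Torus)

/-- The map `ξ = η ∘ ρ_{w}` for `w ∈ ℓ¹(Γ)`. -/
def xiMap (w : Γ → ℝ) (v : Γ → ℝ) : Γ → Torus := etaT (rhoL1 w v)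

/-- A point `x ∈ 𝕋^Γ` is homoclinic if `λ^γ x → 0` along the cofinite filter on `Γ`. -/
def IsHomoclinic (x : Γ → Torus) : Prop :=
  Filter.Tendsto (fun γ : Γ => lsh γ x) Filter.cofinite (nhds 0)

/-- The set of `Γ'`-fixed points of `α_f` in `X_f`. -/
def FixSet (f : Γ →₀ ℤ) (Γ' : Subgroup Γ) : Set (Γ → Torus) :=
  {x | x ∈ XSet f ∧ ∀ γ ∈ Γ', lsh γ x = x}

/-- Left `(K,ε)`-invariance of a finite set `Q ⊆ Γ`. -/
def LeftInv [DecidableEq Γ] (K : Finset Γ) (ε : ℝ) (Q : Finset Γ) : Prop :=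
  ∑ γ ∈ K, (((Q.image fun q => γ * q) ∆ Q).card : ℝ) / (Q.card : ℝ) < ε

/-- Right `(K,ε)`-invariance of a finite set `Q ⊆ Γ`. -/
def RightInv [DecidableEq Γ] (K : Finset Γ) (ε : ℝ) (Q : Finset Γ) : Prop :=
  ∑ γ ∈ K, (((Q.image fun q => q * γ) ∆ Q).card : ℝ) / (Q.card : ℝ) < ε

/-- Amenability: existence of a left Følner sequence. -/
def Amenable (Γ : Type*) [Group Γ] [DecidableEq Γ] : Prop :=
  ∃ Q : ℕ → Finset Γ, (∀ n, (Q n).Nonempty) ∧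
    ∀ (K : Finset Γ) (ε : ℝ), 0 < ε → ∃ N : ℕ, ∀ n ≥ N, LeftInv K ε (Q n)

/-- Residual finiteness: there is a sequence of finite-index normal subgroups with
trivial intersection. -/
def ResFinite (Γ : Type*) [Group Γ] : Prop :=
  ∃ N : ℕ → Subgroup Γ, (∀ n, (N n).Normal ∧ (N n).FiniteIndex) ∧
    ∀ γ : Γ, (∀ n, γ ∈ N n) → γ = 1

/-- `Q` is a fundamental domain for the coset space `Γ/Γ'`:
`{γQ : γ ∈ Γ'}` is a partition of `Γ`. -/
def IsFundDomain (Γ' : Subgroup Γ) (Q : Finset Γ) : Prop :=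
  ∀ x : Γ, ∃! p : Γ × Γ, p.1 ∈ Γ' ∧ p.2 ∈ Q ∧ p.1 * p.2 = x

/-- `lim_n Γ_n = {1}`: for every finite `K ⊆ Γ` eventually `Γ_n ∩ K⁻¹K = {1}`. -/
def LimTriv (N : ℕ → Subgroup Γ) : Prop :=
  ∀ K : Finset Γ, ∃ M : ℕ, ∀ n ≥ M, ∀ γ ∈ N n, (∃ a ∈ K, ∃ b ∈ K, γ = a⁻¹ * b) → γ = 1

/-- The word ball `B_F(n)` of radius `n` with respect to a generating set `F`. -/
def BallF (F : Finset Γ) (n : ℕ) : Set Γ :=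
  {γ | ∃ l : List Γ, l.length ≤ n ∧ (∀ a ∈ l, a ∈ F) ∧ l.prod = γ}

end GroupDefs

/-- The Hilbert space `ℓ²(Γ,ℂ)`. -/
abbrev H2 (Γ : Type*) : Type _ := lp (fun _ : Γ => ℂ) 2

section Hilbert

variable {Γ : Type*} [Group Γ]

open Classical in
/-- The standard basis vector `δ₁ ∈ ℓ²(Γ,ℂ)`. -/
def deltaL2 : H2 Γ := lp.single 2 (1 : Γ) (1 : ℂ)

/-- `A` is the right-convolution operator `ρ_f` on `ℓ²(Γ,ℂ)`,
`(ρ_f w)_γ = Σ_{γ'} w_{γγ'} f_{γ'}`. -/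
def IsRho (f : Γ → ℂ) (A : H2 Γ →L[ℂ] H2 Γ) : Prop :=
  ∀ (w : H2 Γ) (γ : Γ), (A w : Γ → ℂ) γ = ∑' γ' : Γ, (w : Γ → ℂ) (γ * γ') * f γ'

/-- The von Neumann trace of `log (A A*)`, i.e. `tr_{NΓ}(log (A A*)) = (log(AA*) δ₁)(1)`,
where `log` is given by the continuous functional calculus. -/
def trLogAAstar (A : H2 Γ →L[ℂ] H2 Γ) : ℝ :=
  (((@cfc ℝ _ IsSelfAdjoint _ _ _ _ _ _ _ _ _ IsSelfAdjoint.instContinuousFunctionalCalculus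
    Real.log (A * star A)) deltaL2 : Γ → ℂ) (1 : Γ)).re

/-- The Fuglede–Kadison determinant `det_{NΓ} A = exp(½ tr(log (A A*)))`. -/
def detFK (A : H2 Γ →L[ℂ] H2 Γ) : ℝ := Real.exp (2⁻¹ * trLogAAstar A)

open Classical in
/-- `f^{(n)} : Γ/Γ_n → ℂ`, integration along the fibres: `f^{(n)}(δ) = Σ_{γ ∈ δ} f_γ`. -/
def fQuot (f : Γ → ℂ) (H : Subgroup Γ) : (Γ ⧸ H) → ℂ :=
  fun δ => ∑' γ : Γ, if (QuotientGroup.mk γ : Γ ⧸ H) = δ then f γ else 0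

open Classical in
/-- The indicator of the identity coset in `ℓ²(Γ/Γ_n, ℂ)`. -/
def deltaQuot (H : Subgroup Γ) : (Γ ⧸ H) → ℂ :=
  fun δ => if δ = (QuotientGroup.mk (1 : Γ) : Γ ⧸ H) then 1 else 0

end Hilbert


section Statement2Aux

variable {Γ : Type*} [Group Γ]

private lemma bdd_exists_nonneg {v : Γ → ℝ} (h : Bdd v) : ∃ C, 0 ≤ C ∧ ∀ γ, |v γ| ≤ C := by
  obtain ⟨C, hC⟩ := h
  exact ⟨C, le_trans (abs_nonneg _) (hC 1), hC⟩

private lemma summable_bdd_mul {v h : Γ → ℝ} (hv : Bdd v) (hh : Summable h) :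
    Summable fun γ => v γ * h γ := by
  obtain ⟨C, _, hC⟩ := bdd_exists_nonneg hv
  refine Summable.of_norm ((hh.abs.mul_left C).of_nonneg_of_le
    (fun γ => norm_nonneg _) fun γ => ?_)
  rw [Real.norm_eq_abs, abs_mul]
  exact mul_le_mul_of_nonneg_right (hC γ) (abs_nonneg _)

private lemma summable_shift_left {w : Γ → ℝ} (hw : Summable w) (a : Γ) :
    Summable fun γ => w (a * γ) :=
  ((Equiv.mulLeft a).summable_iff).2 hw

private lemma summable_shift_right {w : Γ → ℝ} (hw : Summable w) (a : Γ) :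
    Summable fun γ => w (γ * a) :=
  ((Equiv.mulRight a).summable_iff).2 hw

private lemma conv_fR_eq_sum (f : Γ →₀ ℤ) (w : Γ → ℝ) (δ : Γ) :
    conv (fR f) w δ = ∑ γ' ∈ f.support, (f γ' : ℝ) * w (γ'⁻¹ * δ) :=
  tsum_eq_sum (by intro b hb; simp [fR, Finsupp.notMem_support_iff.mp hb])

private lemma conv_fR_eq_sum' (f : Γ →₀ ℤ) (w : Γ → ℝ) (δ : Γ) :
    conv w (fR f) δ = ∑ γ' ∈ f.support, w (δ * γ'⁻¹) * (f γ' : ℝ) := by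
  have h1 : conv w (fR f) δ = ∑' γ' : Γ, w (δ * γ'⁻¹) * fR f γ' := by
    rw [conv, ← ((Equiv.inv Γ).trans (Equiv.mulLeft δ)).tsum_eq
      (fun γ'' => w γ'' * fR f (γ''⁻¹ * δ))]
    refine tsum_congr fun γ' => ?_
    simp [mul_assoc]
  rw [h1]
  exact tsum_eq_sum (by intro b hb; simp [fR, Finsupp.notMem_support_iff.mp hb])

private lemma rhoInf_rhoL1 (f : Γ →₀ ℤ) {w v : Γ → ℝ} (hw : Summable w) (hv : Bdd v)
    (hfw : conv (fR f) w = deltaOne) : rhoInf f (rhoL1 w v) = v := by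
  obtain ⟨C, _, hC⟩ := bdd_exists_nonneg hv
  funext γ
  have key : ∀ γ' : Γ, (f γ' : ℝ) * rhoL1 w v (γ * γ')
      = ∑' δ : Γ, (f γ' : ℝ) * (v (γ * δ) * w (γ'⁻¹ * δ)) := by
    intro γ'
    rw [rhoL1, ← tsum_mul_left,
      ← (Equiv.mulLeft γ').tsum_eq (fun δ => (f γ' : ℝ) * (v (γ * δ) * w (γ'⁻¹ * δ)))]
    refine tsum_congr fun γ'' => ?_
    simp [mul_assoc]
  have hsum : ∀ γ' ∈ f.support,
      Summable fun δ => (f γ' : ℝ) * (v (γ * δ) * w (γ'⁻¹ * δ)) := by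
    intro γ' _
    exact (summable_bdd_mul ⟨C, fun δ => hC _⟩ (summable_shift_left hw γ'⁻¹)).mul_left _
  calc rhoInf f (rhoL1 w v) γ
      = ∑ γ' ∈ f.support, ∑' δ : Γ, (f γ' : ℝ) * (v (γ * δ) * w (γ'⁻¹ * δ)) := by
        rw [rhoInf, Finsupp.sum]; exact Finset.sum_congr rfl fun γ' _ => key γ'
    _ = ∑' δ : Γ, ∑ γ' ∈ f.support, (f γ' : ℝ) * (v (γ * δ) * w (γ'⁻¹ * δ)) :=
        (Summable.tsum_finsetSum hsum).symm
    _ = ∑' δ : Γ, v (γ * δ) * deltaOne δ := by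
        refine tsum_congr fun δ => ?_
        have h2 : ∑ γ' ∈ f.support, (f γ' : ℝ) * (v (γ * δ) * w (γ'⁻¹ * δ))
            = v (γ * δ) * ∑ γ' ∈ f.support, (f γ' : ℝ) * w (γ'⁻¹ * δ) := by
          rw [Finset.mul_sum]; exact Finset.sum_congr rfl fun γ' _ => by ring
        rw [h2, ← conv_fR_eq_sum, hfw]
    _ = v γ := by
        rw [tsum_eq_single 1 (by intro δ hδ; simp [deltaOne, hδ])]
        simp [deltaOne]

private lemma rhoL1_rhoInf (f : Γ →₀ ℤ) {w u : Γ → ℝ} (hw : Summable w) (hu : Bdd u)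
    (hwf : conv w (fR f) = deltaOne) : rhoL1 w (rhoInf f u) = u := by
  obtain ⟨C, _, hC⟩ := bdd_exists_nonneg hu
  funext γ
  have hsum1 : ∀ γ' ∈ f.support,
      Summable fun γ'' : Γ => ((f γ' : ℝ) * u (γ * γ'' * γ')) * w γ'' := by
    intro γ' _
    have : Summable fun γ'' : Γ => u (γ * γ'' * γ') * w γ'' :=
      summable_bdd_mul ⟨C, fun γ'' => hC _⟩ hw
    simpa [mul_assoc] using this.mul_left ((f γ' : ℝ))
  have hsum2 : ∀ γ' ∈ f.support,
      Summable fun δ : Γ => (f γ' : ℝ) * (u (γ * δ) * w (δ * γ'⁻¹)) := by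
    intro γ' _
    exact (summable_bdd_mul ⟨C, fun δ => hC _⟩ (summable_shift_right hw γ'⁻¹)).mul_left _
  calc rhoL1 w (rhoInf f u) γ
      = ∑' γ'' : Γ, ∑ γ' ∈ f.support, ((f γ' : ℝ) * u (γ * γ'' * γ')) * w γ'' := by
        rw [rhoL1]
        refine tsum_congr fun γ'' => ?_
        rw [rhoInf, Finsupp.sum, Finset.sum_mul]
    _ = ∑ γ' ∈ f.support, ∑' γ'' : Γ, ((f γ' : ℝ) * u (γ * γ'' * γ')) * w γ'' :=
        Summable.tsum_finsetSum hsum1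
    _ = ∑ γ' ∈ f.support, ∑' δ : Γ, (f γ' : ℝ) * (u (γ * δ) * w (δ * γ'⁻¹)) := by
        refine Finset.sum_congr rfl fun γ' _ => ?_
        rw [← (Equiv.mulRight γ').tsum_eq
          (fun δ => (f γ' : ℝ) * (u (γ * δ) * w (δ * γ'⁻¹)))]
        refine tsum_congr fun γ'' => ?_
        simp [mul_assoc]
    _ = ∑' δ : Γ, ∑ γ' ∈ f.support, (f γ' : ℝ) * (u (γ * δ) * w (δ * γ'⁻¹)) :=
        (Summable.tsum_finsetSum hsum2).symm
    _ = ∑' δ : Γ, u (γ * δ) * deltaOne δ := by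
        refine tsum_congr fun δ => ?_
        have h2 : ∑ γ' ∈ f.support, (f γ' : ℝ) * (u (γ * δ) * w (δ * γ'⁻¹))
            = u (γ * δ) * ∑ γ' ∈ f.support, w (δ * γ'⁻¹) * (f γ' : ℝ) := by
          rw [Finset.mul_sum]; exact Finset.sum_congr rfl fun γ' _ => by ring
        rw [h2, ← conv_fR_eq_sum', hwf]
    _ = u γ := by
        rw [tsum_eq_single 1 (by intro δ hδ; simp [deltaOne, hδ])]
        simp [deltaOne]

private lemma bdd_rhoL1 {w v : Γ → ℝ} (hw : Summable w) (hv : Bdd v) : Bdd (rhoL1 w v) := by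
  obtain ⟨C, _, hC⟩ := bdd_exists_nonneg hv
  refine ⟨C * ∑' γ, |w γ|, fun γ => ?_⟩
  have hs : Summable fun γ' => v (γ * γ') * w γ' :=
    summable_bdd_mul ⟨C, fun γ' => hC _⟩ hw
  calc |rhoL1 w v γ| ≤ ∑' γ', ‖v (γ * γ') * w γ'‖ := by
        rw [← Real.norm_eq_abs]
        exact norm_tsum_le_tsum_norm (by simpa [Real.norm_eq_abs, abs_mul] using hs.abs)
    _ ≤ ∑' γ', C * |w γ'| := by
        refine Summable.tsum_le_tsum (fun γ' => ?_) (by simpa [Real.norm_eq_abs, abs_mul] using hs.abs)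
          (hw.abs.mul_left C)
        rw [Real.norm_eq_abs, abs_mul]
        exact mul_le_mul_of_nonneg_right (hC _) (abs_nonneg _)
    _ = C * ∑' γ', |w γ'| := tsum_mul_left

private lemma bdd_rhoInf (f : Γ →₀ ℤ) {u : Γ → ℝ} (hu : Bdd u) : Bdd (rhoInf f u) := by
  obtain ⟨C, hC0, hC⟩ := bdd_exists_nonneg hu
  refine ⟨(∑ γ' ∈ f.support, |(f γ' : ℝ)|) * C, fun γ => ?_⟩
  rw [rhoInf, Finsupp.sum]
  calc |∑ γ' ∈ f.support, (f γ' : ℝ) * u (γ * γ')|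
      ≤ ∑ γ' ∈ f.support, |(f γ' : ℝ) * u (γ * γ')| := Finset.abs_sum_le_sum_abs _ _
    _ ≤ ∑ γ' ∈ f.support, |(f γ' : ℝ)| * C := by
        refine Finset.sum_le_sum fun γ' _ => ?_
        rw [abs_mul]
        exact mul_le_mul_of_nonneg_left (hC _) (abs_nonneg _)
    _ = (∑ γ' ∈ f.support, |(f γ' : ℝ)|) * C := by rw [Finset.sum_mul]

private lemma torus_coe_eq_zero_iff (r : ℝ) : ((r : ℝ) : Torus) = 0 ↔ ∃ k : ℤ, r = (k : ℝ) := by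
  rw [AddCircle.coe_eq_zero_iff]
  constructor
  · rintro ⟨n, hn⟩; exact ⟨n, by simpa using hn.symm⟩
  · rintro ⟨k, hk⟩; exact ⟨k, by simp [hk]⟩

/-- The quotient map `ℝ →+ 𝕋` as an additive homomorphism. -/
private def qmapT : ℝ →+ Torus := QuotientAddGroup.mk' (AddSubgroup.zmultiples (1 : ℝ))

private lemma etaT_intValued {v : Γ → ℝ} (hv : IntValued v) : etaT v = 0 := by
  funext γ
  obtain ⟨k, hk⟩ := hv γ
  show ((v γ : ℝ) : Torus) = 0
  exact (torus_coe_eq_zero_iff _).2 ⟨k, hk⟩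

private lemma rhoT_etaT (f : Γ →₀ ℤ) (u : Γ → ℝ) : rhoT f (etaT u) = etaT (rhoInf f u) := by
  funext γ'
  show (f.sum fun γ c => c • ((u (γ' * γ) : ℝ) : Torus))
      = qmapT (f.sum fun γ c => (c : ℝ) * u (γ' * γ))
  rw [Finsupp.sum, Finsupp.sum, map_sum]
  refine Finset.sum_congr rfl fun γ _ => ?_
  rw [← zsmul_eq_mul, map_zsmul]
  rfl

private lemma etaT_add (a b : Γ → ℝ) : etaT (a + b) = etaT a + etaT b := by
  funext γ
  show qmapT (a γ + b γ) = qmapT (a γ) + qmapT (b γ)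
  exact map_add _ _ _

private lemma rhoL1_add {w v v' : Γ → ℝ} (hw : Summable w) (hv : Bdd v) (hv' : Bdd v') :
    rhoL1 w (v + v') = rhoL1 w v + rhoL1 w v' := by
  obtain ⟨C, _, hC⟩ := bdd_exists_nonneg hv
  obtain ⟨C', _, hC'⟩ := bdd_exists_nonneg hv'
  funext γ
  show (∑' γ', (v + v') (γ * γ') * w γ')
      = (∑' γ', v (γ * γ') * w γ') + ∑' γ', v' (γ * γ') * w γ'
  rw [← Summable.tsum_add (summable_bdd_mul ⟨C, fun γ' => hC _⟩ hw)
    (summable_bdd_mul ⟨C', fun γ' => hC' _⟩ hw)]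
  refine tsum_congr fun γ' => ?_
  show (v (γ * γ') + v' (γ * γ')) * w γ' = _
  ring

private lemma rhoL1_lshR (w : Γ → ℝ) (γ : Γ) (v : Γ → ℝ) :
    rhoL1 w (lshR γ v) = lshR γ (rhoL1 w v) := by
  funext γ'
  show (∑' γ'', v (γ⁻¹ * (γ' * γ'')) * w γ'') = ∑' γ'', v ((γ⁻¹ * γ') * γ'') * w γ''
  exact tsum_congr fun γ'' => by rw [mul_assoc]

end Statement2Aux


/-- Let `Γ` be a countable discrete group and `f ∈ ℤΓ` invertible in
`ℓ¹(Γ)` with inverse `w = w_f^Δ = f⁻¹`. Then `ξ = η ∘ ρ_w : ℓ∞(Γ,ℤ) → X_f` is a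
well-defined surjective group homomorphism with kernel `ρ_f(ℓ∞(Γ,ℤ))`, and
`ξ ∘ λ^γ = α_f^γ ∘ ξ` for every `γ ∈ Γ`. -/
theorem statement2 {Γ : Type*} [Group Γ] [Countable Γ] (f : Γ →₀ ℤ) (w : Γ → ℝ)
    (hw : IsL1Inverse (fR f) w) :
    (∀ v : Γ → ℝ, Bdd v → IntValued v → xiMap w v ∈ XSet f) ∧
    (∀ v v' : Γ → ℝ, Bdd v → IntValued v → Bdd v' → IntValued v' →
      xiMap w (v + v') = xiMap w v + xiMap w v') ∧
    (∀ x ∈ XSet f, ∃ v : Γ → ℝ, Bdd v ∧ IntValued v ∧ xiMap w v = x) ∧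
    (∀ v : Γ → ℝ, Bdd v → IntValued v →
      (xiMap w v = 0 ↔ ∃ u : Γ → ℝ, Bdd u ∧ IntValued u ∧ rhoInf f u = v)) ∧
    (∀ (γ : Γ) (v : Γ → ℝ), Bdd v → IntValued v →
      xiMap w (lshR γ v) = lsh γ (xiMap w v)) := by
  obtain ⟨hsum, hfw, hwf⟩ := hw
  have hint_of_eta : ∀ a : Γ → ℝ, etaT a = 0 → IntValued a := by
    intro a ha γ
    have : ((a γ : ℝ) : Torus) = 0 := congrFun ha γ
    exact (torus_coe_eq_zero_iff _).1 this
  refine ⟨?_, ?_, ?_, ?_, ?_⟩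
  · intro v hb hi
    show rhoT f (etaT (rhoL1 w v)) = 0
    rw [rhoT_etaT, rhoInf_rhoL1 f hsum hb hfw]
    exact etaT_intValued hi
  · intro v v' hb _ hb' _
    show etaT (rhoL1 w (v + v')) = _
    rw [rhoL1_add hsum hb hb', etaT_add]
    rfl
  · intro x hx
    haveI : Fact ((0:ℝ) < 1) := ⟨one_pos⟩
    set u : Γ → ℝ := fun γ => (AddCircle.equivIco 1 0 (x γ) : ℝ) with hu_def
    have hu : Bdd u := by
      refine ⟨1, fun γ => ?_⟩
      have h := (AddCircle.equivIco 1 0 (x γ)).2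
      simp only [Set.mem_Ico, zero_add] at h
      rw [abs_le]; exact ⟨by linarith [h.1], le_of_lt h.2⟩
    have hxu : etaT u = x := by
      funext γ
      exact (AddCircle.equivIco 1 0).symm_apply_apply (x γ)
    have hiv : IntValued (rhoInf f u) := by
      apply hint_of_eta
      rw [← rhoT_etaT, hxu]
      exact hx
    refine ⟨rhoInf f u, bdd_rhoInf f hu, hiv, ?_⟩
    show etaT (rhoL1 w (rhoInf f u)) = x
    rw [rhoL1_rhoInf f hsum hu hwf, hxu]
  · intro v hb _
    constructor
    · intro h0
      refine ⟨rhoL1 w v, bdd_rhoL1 hsum hb, hint_of_eta _ h0, ?_⟩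
      exact rhoInf_rhoL1 f hsum hb hfw
    · rintro ⟨u, hub, hui, rfl⟩
      show etaT (rhoL1 w (rhoInf f u)) = 0
      rw [rhoL1_rhoInf f hsum hub hwf]
      exact etaT_intValued hui
  · intro γ v _ _
    show etaT (rhoL1 w (lshR γ v)) = _
    rw [rhoL1_lshR]
    rfl

end
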